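/- For every integer n ≥ 6 there exists a finite simple graph G on n vertices with no isolated vertices such that the edge polytope P(G) has at least n⁴/54 edges (1-dimensional faces). -/

import Mathlib

open Set

/-- The edge polytope of a graph `G` on the vertex set `Fin n`. -/
def edgePolytope {n : ℕ} (G : SimpleGraph (Fin n)) : Set (Fin n → ℝ) :=
  convexHull ℝ {x | ∃ i j : Fin n, G.Adj i j ∧ x = Pi.single i 1 + Pi.single j 1}

/-- The dimension of a polytope: the dimension of its affine hull. -/
noncomputable def polyDim {n : ℕ} (P : Set (Fin n → ℝ)) : ℕ :=
  Module.finrank ℝ (vectorSpan ℝ P)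

/-- `faceCount P k` is the number of (nonempty) `k`-dimensional faces of `P`,
a face being the intersection of `P` with a supporting hyperplane (`IsExposed`). -/
noncomputable def faceCount {n : ℕ} (P : Set (Fin n → ℝ)) (k : ℕ) : ℕ :=
  {F : Set (Fin n → ℝ) | IsExposed ℝ P F ∧ F.Nonempty ∧ polyDim F = k}.ncard

namespace EPaux
variable {n : ℕ}

variable {n : ℕ}

/-- vertex of the edge polytope corresponding to the pair (i,j) -/
noncomputable def vtx (i j : Fin n) : Fin n → ℝ := Pi.single i 1 + Pi.single j 1

/-- the linear functional x ↦ ∑ w t * x t as a continuous linear map -/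
noncomputable def lf (w : Fin n → ℝ) : (Fin n → ℝ) →L[ℝ] ℝ :=
  LinearMap.toContinuousLinearMap (∑ t : Fin n, w t • LinearMap.proj t)

lemma lf_apply (w x : Fin n → ℝ) : lf w x = ∑ t : Fin n, w t * x t := by
  simp [lf, LinearMap.toContinuousLinearMap]

lemma sum_single (w : Fin n → ℝ) (p : Fin n) :
    ∑ t : Fin n, w t * (Pi.single p (1:ℝ) : Fin n → ℝ) t = w p := by
  rw [Finset.sum_eq_single p]
  · simp
  · intro b _ hb; simp [Pi.single_apply, hb]
  · simp

lemma lf_vtx (w : Fin n → ℝ) (p q : Fin n) : lf w (vtx p q) = w p + w q := by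
  rw [lf_apply, vtx]
  have : ∀ t, w t * (((Pi.single p (1:ℝ) : Fin n → ℝ) + (Pi.single q (1:ℝ) : Fin n → ℝ)) t)
      = w t * (Pi.single p (1:ℝ) : Fin n → ℝ) t + w t * (Pi.single q (1:ℝ) : Fin n → ℝ) t := by
    intro t
    rw [Pi.add_apply, mul_add]
  rw [Finset.sum_congr rfl (fun t _ => this t), Finset.sum_add_distrib,
    sum_single, sum_single]

lemma vtx_apply (p q t : Fin n) (hpq : p ≠ q) :
    vtx p q t = if t = p ∨ t = q then 1 else 0 := by
  simp only [vtx, Pi.add_apply, Pi.single_apply]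
  rcases eq_or_ne t p with h | h <;> rcases eq_or_ne t q with h' | h' <;>
    simp_all

lemma vtx_eq_iff {p q p' q' : Fin n} (hpq : p ≠ q) (hpq' : p' ≠ q') :
    vtx p q = vtx p' q' ↔ (p = p' ∧ q = q') ∨ (p = q' ∧ q = p') := by
  constructor
  · intro h
    have hp : vtx p q p = vtx p' q' p := congrFun h p
    have hq : vtx p q q = vtx p' q' q := congrFun h q
    rw [vtx_apply _ _ _ hpq, vtx_apply _ _ _ hpq'] at hp hq
    rw [if_pos (Or.inl rfl)] at hp
    rw [if_pos (Or.inr rfl)] at hq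
    have h1 : p = p' ∨ p = q' := by
      by_contra hc
      rw [if_neg hc] at hp
      norm_num at hp
    have h2 : q = p' ∨ q = q' := by
      by_contra hc
      rw [if_neg hc] at hq
      norm_num at hq
    rcases h1 with h1 | h1 <;> rcases h2 with h2 | h2
    · exact absurd (h1 ▸ h2 ▸ rfl : p = q) hpq
    · exact Or.inl ⟨h1, h2⟩
    · exact Or.inr ⟨h1, h2⟩
    · exact absurd (h1 ▸ h2 ▸ rfl : p = q) hpq
  · rintro (⟨rfl, rfl⟩ | ⟨rfl, rfl⟩)
    · rfl
    · simp [vtx, add_comm]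

/-- key face lemma: points of the hull where a linear functional attains its
sup over the generators lie in the hull of the maximizing generators. -/
lemma mem_hull_maximizers {V : Set (Fin n → ℝ)} {l : (Fin n → ℝ) →L[ℝ] ℝ} {M : ℝ}
    (hV : ∀ v ∈ V, l v ≤ M) {x : Fin n → ℝ} (hx : x ∈ convexHull ℝ V)
    (hxM : l x = M) : x ∈ convexHull ℝ {v ∈ V | l v = M} := by
  rw [convexHull_eq] at hx
  obtain ⟨ι, t, w, z, hw0, hw1, hz, hx⟩ := hx
  have hmass : ∑ i ∈ t.filter (fun i => w i ≠ 0), w i = 1 := by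
    rw [Finset.sum_filter_ne_zero]; exact hw1
  have hlx : ∑ i ∈ t, w i * l (z i) = M := by
    have : l x = ∑ i ∈ t, w i * l (z i) := by
      rw [← hx, Finset.centerMass, hw1, inv_one, one_smul, map_sum]
      simp [mul_comm]
    rw [← this, hxM]
  have hmax : ∀ i ∈ t.filter (fun i => w i ≠ 0), l (z i) = M := by
    by_contra hc
    push_neg at hc
    obtain ⟨i0, hi0, hne⟩ := hc
    rw [Finset.mem_filter] at hi0
    have hlt : l (z i0) < M := lt_of_le_of_ne (hV _ (hz _ hi0.1)) hne
    have : ∑ i ∈ t, w i * l (z i) < ∑ i ∈ t, w i * M := by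
      apply Finset.sum_lt_sum
      · intro i hi
        exact mul_le_mul_of_nonneg_left (hV _ (hz _ hi)) (hw0 _ hi)
      · exact ⟨i0, hi0.1, by
          apply mul_lt_mul_of_pos_left hlt
          exact lt_of_le_of_ne (hw0 _ hi0.1) (Ne.symm hi0.2)⟩
    rw [hlx, ← Finset.sum_mul, hw1, one_mul] at this
    exact lt_irrefl _ this
  rw [← hx, ← Finset.centerMass_filter_ne_zero z]
  apply Finset.centerMass_mem_convexHull
  · intro i hi; exact hw0 _ (Finset.mem_filter.mp hi).1
  · rw [hmass]; norm_num
  · intro i hi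
    refine ⟨hz _ (Finset.mem_filter.mp hi).1, hmax _ hi⟩




/-- an extreme point argument: a vtx in a segment of two vtx's is an endpoint -/
lemma vtx_mem_segment {p q u v r s : Fin n} (hpq : p ≠ q) (huv : u ≠ v) (hrs : r ≠ s)
    (h : vtx r s ∈ segment ℝ (vtx p q) (vtx u v)) :
    vtx r s = vtx p q ∨ vtx r s = vtx u v := by
  by_cases hd : vtx p q = vtx u v
  · rw [← hd] at h ⊢
    rw [segment_same] at h
    exact Or.inl h
  · -- find coordinate t0 with vtx p q t0 = 1, vtx u v t0 = 0
    have hex : ∃ t0, vtx p q t0 = 1 ∧ vtx u v t0 = 0 := by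
      rw [vtx_eq_iff hpq huv] at hd
      push_neg at hd
      by_cases hpu : p = u ∨ p = v
      · refine ⟨q, ?_, ?_⟩
        · rw [vtx_apply _ _ _ hpq, if_pos (Or.inr rfl)]
        · rw [vtx_apply _ _ _ huv, if_neg]
          rintro (h1 | h1)
          · rcases hpu with h2 | h2
            · exact hpq (h2.trans h1.symm)
            · exact hd.2 h2 h1
          · rcases hpu with h2 | h2
            · exact hd.1 h2 h1
            · exact hpq (h2.trans h1.symm)
      · push_neg at hpu
        refine ⟨p, ?_, ?_⟩
        · rw [vtx_apply _ _ _ hpq, if_pos (Or.inl rfl)]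
        · rw [vtx_apply _ _ _ huv, if_neg (by tauto)]
    obtain ⟨t0, h1, h0⟩ := hex
    obtain ⟨a, b, ha, hb, hab, hx⟩ := h
    have hcoord : a = vtx r s t0 := by
      have := congrFun hx t0
      simp only [Pi.add_apply, Pi.smul_apply, smul_eq_mul] at this
      rw [h1, h0] at this
      simpa using this
    have : a = 0 ∨ a = 1 := by
      rw [vtx_apply _ _ _ hrs] at hcoord
      split_ifs at hcoord with h'
      · right; exact hcoord
      · left; exact hcoord
    rcases this with rfl | rfl
    · right
      have hb1 : b = 1 := by linarith
      rw [← hx, hb1]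
      simp
    · left
      have hb0 : b = 0 := by linarith
      rw [← hx, hb0]
      simp

/-- The central lemma: a certificate functional makes a segment an
exposed, nonempty face of the edge polytope with polyDim 1. -/
lemma segment_is_face {G : SimpleGraph (Fin n)} {w : Fin n → ℝ} {i j k l : Fin n}
    (hij : G.Adj i j) (hkl : G.Adj k l)
    (hsum : w k + w l = w i + w j)
    (hub : ∀ p q, G.Adj p q → w p + w q ≤ w i + w j)
    (heq : ∀ p q, G.Adj p q → w p + w q = w i + w j →
      vtx p q = vtx i j ∨ vtx p q = vtx k l)
    (hne : vtx i j ≠ vtx k l) :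
    IsExposed ℝ (convexHull ℝ {x | ∃ p q : Fin n, G.Adj p q ∧ x = vtx p q})
        (segment ℝ (vtx i j) (vtx k l)) ∧
      (segment ℝ (vtx i j) (vtx k l)).Nonempty ∧
      Module.finrank ℝ (vectorSpan ℝ (segment ℝ (vtx i j) (vtx k l))) = 1 := by
  set V : Set (Fin n → ℝ) := {x | ∃ p q : Fin n, G.Adj p q ∧ x = vtx p q} with hV
  set P := convexHull ℝ V with hP
  set l0 := lf w with hl0
  set M := w i + w j with hM
  have hVle : ∀ v ∈ V, l0 v ≤ M := by
    rintro v ⟨p, q, hpq, rfl⟩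
    rw [hl0, lf_vtx]
    exact hub p q hpq
  have hPle : ∀ y ∈ P, l0 y ≤ M := by
    intro y hy
    have : P ⊆ {y | l0 y ≤ M} := by
      rw [hP]
      apply convexHull_min hVle
      exact convex_halfSpace_le (l0.toLinearMap.isLinear) M
    exact this hy
  have hvij : vtx i j ∈ V := ⟨i, j, hij, rfl⟩
  have hvkl : vtx k l ∈ V := ⟨k, l, hkl, rfl⟩
  have hlij : l0 (vtx i j) = M := by rw [hl0, lf_vtx]
  have hlkl : l0 (vtx k l) = M := by rw [hl0, lf_vtx]; exact hsum
  have hsub : segment ℝ (vtx i j) (vtx k l) ⊆ P := by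
    rw [← convexHull_pair, hP]
    exact convexHull_mono (by rintro x (rfl | rfl) <;> [exact hvij; exact hvkl])
  have hseg_eq : segment ℝ (vtx i j) (vtx k l) = {x ∈ P | ∀ y ∈ P, l0 y ≤ l0 x} := by
    apply Set.eq_of_subset_of_subset
    · rintro x hx
      refine ⟨hsub hx, ?_⟩
      have hlx : l0 x = M := by
        obtain ⟨a, b, ha, hb, hab, rfl⟩ := hx
        simp only [map_add, map_smul, smul_eq_mul, hlij, hlkl]
        rw [← add_mul, hab, one_mul]
      intro y hy
      rw [hlx]
      exact hPle y hy
    · rintro x ⟨hxP, hxmax⟩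
      have hlx : l0 x = M := by
        refine le_antisymm (hPle x hxP) ?_
        rw [← hlij]
        exact hxmax _ (subset_convexHull ℝ V hvij)
      have hx2 : x ∈ convexHull ℝ {v ∈ V | l0 v = M} :=
        mem_hull_maximizers hVle hxP hlx
      have hsub2 : {v ∈ V | l0 v = M} ⊆ {vtx i j, vtx k l} := by
        rintro v ⟨⟨p, q, hpq, rfl⟩, hvM⟩
        rw [hl0, lf_vtx] at hvM
        exact heq p q hpq hvM
      have hx3 := convexHull_mono hsub2 hx2
      rw [convexHull_pair] at hx3
      exact hx3
  refine ⟨?_, ⟨_, left_mem_segment ℝ _ _⟩, ?_⟩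
  · intro _
    exact ⟨l0, hseg_eq⟩
  · have h1 : vectorSpan ℝ (segment ℝ (vtx i j) (vtx k l))
        = vectorSpan ℝ {vtx i j, vtx k l} := by
      rw [← convexHull_pair, ← direction_affineSpan, ← direction_affineSpan,
        affineSpan_convexHull]
    rw [h1, vectorSpan_pair]
    apply finrank_span_singleton
    rw [vsub_eq_sub, sub_ne_zero]
    exact hne



/-- every nonempty exposed face of a polytope is the hull of the vertices it contains -/
lemma exposed_face_eq_hull {V : Set (Fin n → ℝ)} {F : Set (Fin n → ℝ)}
    (hF : IsExposed ℝ (convexHull ℝ V) F) (hFne : F.Nonempty) :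
    F = convexHull ℝ (V ∩ F) := by
  obtain ⟨l, hl⟩ := hF hFne
  obtain ⟨x0, hx0⟩ := hFne
  set P := convexHull ℝ V with hP
  set M := l x0 with hM
  have hx0' := hl ▸ hx0
  obtain ⟨hx0P, hx0max⟩ := hx0'
  have hPle : ∀ y ∈ P, l y ≤ M := fun y hy => hx0max y hy
  have hFM : F = {x ∈ P | l x = M} := by
    rw [hl]
    ext x
    constructor
    · rintro ⟨hxP, hxmax⟩
      exact ⟨hxP, le_antisymm (hPle x hxP) (hxmax x0 hx0P)⟩
    · rintro ⟨hxP, hxM⟩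
      exact ⟨hxP, fun y hy => hxM ▸ hPle y hy⟩
  have hVsub : V ⊆ P := subset_convexHull ℝ V
  have hVF : V ∩ F = {v ∈ V | l v = M} := by
    ext v
    simp only [mem_inter_iff, hFM, mem_setOf_eq, mem_sep_iff]
    exact ⟨fun ⟨h1, _, h3⟩ => ⟨h1, h3⟩, fun ⟨h1, h2⟩ => ⟨h1, hVsub h1, h2⟩⟩
  rw [hVF]
  apply Set.eq_of_subset_of_subset
  · intro x hx
    rw [hFM] at hx
    exact mem_hull_maximizers (fun v hv => hPle v (hVsub hv)) hx.1 hx.2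
  · intro x hx
    rw [hFM]
    constructor
    · exact convexHull_mono (fun v hv => hv.1) hx
    · have : x ∈ {y | l y = M} := by
        refine convexHull_min ?_ ?_ hx
        · intro v hv; exact hv.2
        · have : Convex ℝ {y : Fin n → ℝ | l y = M} := by
            have h1 : Convex ℝ {y : Fin n → ℝ | l y ≤ M} :=
              convex_halfSpace_le l.toLinearMap.isLinear M
            have h2 : Convex ℝ {y : Fin n → ℝ | M ≤ l y} :=
              convex_halfSpace_ge l.toLinearMap.isLinear M
            have : {y : Fin n → ℝ | l y = M}
                = {y | l y ≤ M} ∩ {y | M ≤ l y} := by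
              ext y; simp [le_antisymm_iff]
            rw [this]
            exact h1.inter h2
          exact this
      exact this
  
/-- the set of nonempty exposed faces of a polytope is finite -/
lemma finite_exposed_faces {V : Set (Fin n → ℝ)} (hV : V.Finite) :
    {F : Set (Fin n → ℝ) | IsExposed ℝ (convexHull ℝ V) F ∧ F.Nonempty}.Finite := by
  apply Set.Finite.of_finite_image (f := fun F => V ∩ F)
  · apply Set.Finite.subset (Set.Finite.finite_subsets hV)
    rintro S ⟨F, _, rfl⟩
    exact inter_subset_left
  · rintro F1 ⟨h1, h1'⟩ F2 ⟨h2, h2'⟩ heq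
    simp only at heq
    rw [exposed_face_eq_hull h1 h1', exposed_face_eq_hull h2 h2', heq]




lemma vtx_comm (p q : Fin n) : vtx p q = vtx q p := by simp [vtx, add_comm]

/-- template 1: disjoint pair of edges (i,j),(k,l), where i sees neither k nor l. -/
lemma face_of_crossless {G : SimpleGraph (Fin n)} {i j k l : Fin n}
    (hij : G.Adj i j) (hkl : G.Adj k l)
    (hik : ¬ G.Adj i k) (hil : ¬ G.Adj i l)
    (hjk : j ≠ k) (hjl : j ≠ l) (hsik : i ≠ k) (hsil : i ≠ l) :
    IsExposed ℝ (convexHull ℝ {x | ∃ p q : Fin n, G.Adj p q ∧ x = vtx p q})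
        (segment ℝ (vtx i j) (vtx k l)) ∧
      (segment ℝ (vtx i j) (vtx k l)).Nonempty ∧
      Module.finrank ℝ (vectorSpan ℝ (segment ℝ (vtx i j) (vtx k l))) = 1 := by
  have hij' : i ≠ j := hij.ne
  have hkl' : k ≠ l := hkl.ne
  set w : Fin n → ℝ := fun t =>
    if t = i then 6 else if t = j then 0 else if t = k then 3
    else if t = l then 3 else -20 with hw
  have hwi : w i = 6 := by simp [hw]
  have hwj : w j = 0 := by simp [hw, hij'.symm]
  have hwk : w k = 3 := by simp [hw, hsik.symm, hjk.symm]
  have hwl : w l = 3 := by simp [hw, hsil.symm, hjl.symm, hkl']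
  have hwvals : ∀ t, (w t = 6 ∧ t = i) ∨ (w t = 0 ∧ t = j) ∨ (w t = 3 ∧ t = k)
      ∨ (w t = 3 ∧ t = l) ∨ w t = -20 := by
    intro t
    simp only [hw]
    split_ifs with e1 e2 e3 e4
    · exact Or.inl ⟨rfl, e1⟩
    · exact Or.inr (Or.inl ⟨rfl, e2⟩)
    · exact Or.inr (Or.inr (Or.inl ⟨rfl, e3⟩))
    · exact Or.inr (Or.inr (Or.inr (Or.inl ⟨rfl, e4⟩)))
    · exact Or.inr (Or.inr (Or.inr (Or.inr rfl)))
  have hwle : ∀ t, t ≠ i → w t ≤ 3 := by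
    intro t ht
    rcases hwvals t with ⟨h, ht'⟩ | ⟨h, _⟩ | ⟨h, _⟩ | ⟨h, _⟩ | h <;>
      first | exact absurd ht' ht | linarith [h]
  have hwnoti : ∀ t, t ≠ i → t ≠ k → t ≠ l → w t ≤ 0 := by
    intro t ha hb hc
    rcases hwvals t with ⟨h, ht'⟩ | ⟨h, _⟩ | ⟨h, ht'⟩ | ⟨h, ht'⟩ | h
    · exact absurd ht' ha
    · rw [h]
    · exact absurd ht' hb
    · exact absurd ht' hc
    · rw [h]; norm_num
  have hw3 : ∀ t, t ≠ i → w t = 3 → t = k ∨ t = l := by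
    intro t ha h3
    rcases hwvals t with ⟨h, ht'⟩ | ⟨h, _⟩ | ⟨h, ht'⟩ | ⟨h, ht'⟩ | h
    · exact absurd ht' ha
    · rw [h] at h3; norm_num at h3
    · exact Or.inl ht'
    · exact Or.inr ht'
    · rw [h] at h3; norm_num at h3
  have hw0 : ∀ t, t ≠ i → t ≠ k → t ≠ l → w t = 0 → t = j := by
    intro t ha hb hc h0
    rcases hwvals t with ⟨h, ht'⟩ | ⟨h, ht'⟩ | ⟨h, ht'⟩ | ⟨h, ht'⟩ | h
    · exact absurd ht' ha
    · exact ht'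
    · exact absurd ht' hb
    · exact absurd ht' hc
    · rw [h] at h0; norm_num at h0
  apply segment_is_face (w := w) hij hkl
  · rw [hwi, hwj, hwk, hwl]; norm_num
  · intro p q hadj
    rw [hwi, hwj]
    by_cases hpi : p = i
    · subst hpi
      have hq : w q ≤ 0 := hwnoti q hadj.ne'
        (fun h => hik (h ▸ hadj)) (fun h => hil (h ▸ hadj))
      rw [hwi]; linarith
    by_cases hqi : q = i
    · subst hqi
      have hp : w p ≤ 0 := hwnoti p hadj.ne
        (fun h => hik (h ▸ hadj.symm)) (fun h => hil (h ▸ hadj.symm))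
      rw [hwi]; linarith
    · have := hwle p hpi
      have := hwle q hqi
      linarith
  · intro p q hadj hsum
    rw [hwi, hwj] at hsum
    by_cases hpi : p = i
    · subst hpi
      have hqk : q ≠ k := fun h => hik (h ▸ hadj)
      have hql : q ≠ l := fun h => hil (h ▸ hadj)
      have hq0 : w q = 0 := by rw [hwi] at hsum; linarith
      have hqj : q = j := hw0 q hadj.ne' hqk hql hq0
      rw [hqj]; exact Or.inl rfl
    by_cases hqi : q = i
    · have hadj' : G.Adj i p := by rw [← hqi]; exact hadj.symm
      have hpk : p ≠ k := fun h => hik (h ▸ hadj')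
      have hpl : p ≠ l := fun h => hil (h ▸ hadj')
      have hq6 : w q = 6 := by rw [hqi, hwi]
      have hp0 : w p = 0 := by linarith
      have hpj : p = j := hw0 p hadj'.ne' hpk hpl hp0
      rw [hpj, hqi]; exact Or.inl (vtx_comm j i)
    · have h1 := hwle p hpi
      have h2 := hwle q hqi
      have hp3 : w p = 3 := by linarith
      have hq3 : w q = 3 := by linarith
      rcases hw3 p hpi hp3 with hp' | hp' <;> rcases hw3 q hqi hq3 with hq' | hq'
      · exact absurd (hp'.trans hq'.symm) hadj.ne
      · rw [hp', hq']; exact Or.inr rfl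
      · rw [hp', hq']; exact Or.inr (vtx_comm l k)
      · exact absurd (hp'.trans hq'.symm) hadj.ne
  · intro hcon
    rcases (vtx_eq_iff hij' hkl').mp hcon with ⟨h1, _⟩ | ⟨h1, _⟩
    · exact hsik h1
    · exact hsil h1

/-- template 2: two edges sharing the vertex x. -/
lemma face_of_star {G : SimpleGraph (Fin n)} {x y z : Fin n}
    (hxy : G.Adj x y) (hxz : G.Adj x z) (hyz : y ≠ z) :
    IsExposed ℝ (convexHull ℝ {x' | ∃ p q : Fin n, G.Adj p q ∧ x' = vtx p q})
        (segment ℝ (vtx x y) (vtx x z)) ∧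
      (segment ℝ (vtx x y) (vtx x z)).Nonempty ∧
      Module.finrank ℝ (vectorSpan ℝ (segment ℝ (vtx x y) (vtx x z))) = 1 := by
  have hxy' : x ≠ y := hxy.ne
  have hxz' : x ≠ z := hxz.ne
  set w : Fin n → ℝ := fun t =>
    if t = x then 2 else if t = y then 1 else if t = z then 1 else 0 with hw
  have hwx : w x = 2 := by simp [hw]
  have hwy : w y = 1 := by simp [hw, hxy'.symm]
  have hwz : w z = 1 := by simp [hw, hxz'.symm, hyz.symm]
  have hwvals : ∀ t, (w t = 2 ∧ t = x) ∨ (w t = 1 ∧ t = y) ∨ (w t = 1 ∧ t = z)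
      ∨ w t = 0 := by
    intro t
    simp only [hw]
    split_ifs with e1 e2 e3
    · exact Or.inl ⟨rfl, e1⟩
    · exact Or.inr (Or.inl ⟨rfl, e2⟩)
    · exact Or.inr (Or.inr (Or.inl ⟨rfl, e3⟩))
    · exact Or.inr (Or.inr (Or.inr rfl))
  have hwle : ∀ t, t ≠ x → w t ≤ 1 := by
    intro t ht
    rcases hwvals t with ⟨h, ht'⟩ | ⟨h, _⟩ | ⟨h, _⟩ | h <;>
      first | exact absurd ht' ht | linarith [h]
  have hw1 : ∀ t, t ≠ x → w t = 1 → t = y ∨ t = z := by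
    intro t ht h1
    rcases hwvals t with ⟨h, ht'⟩ | ⟨h, ht'⟩ | ⟨h, ht'⟩ | h
    · exact absurd ht' ht
    · exact Or.inl ht'
    · exact Or.inr ht'
    · rw [h] at h1; norm_num at h1
  apply segment_is_face (w := w) hxy hxz
  · rw [hwx, hwy, hwz]
  · intro p q hadj
    rw [hwx, hwy]
    by_cases hpx : p = x
    · subst hpx
      have := hwle q hadj.ne'
      rw [hwx]; linarith
    by_cases hqx : q = x
    · subst hqx
      have := hwle p hadj.ne
      rw [hwx]; linarith
    · have := hwle p hpx
      have := hwle q hqx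
      linarith
  · intro p q hadj hsum
    rw [hwx, hwy] at hsum
    by_cases hpx : p = x
    · subst hpx
      have hq1 : w q = 1 := by rw [hwx] at hsum; linarith
      rcases hw1 q hadj.ne' hq1 with hq' | hq'
      · rw [hq']; exact Or.inl rfl
      · rw [hq']; exact Or.inr rfl
    by_cases hqx : q = x
    · have hadj' : G.Adj x p := by rw [← hqx]; exact hadj.symm
      have hq2 : w q = 2 := by rw [hqx, hwx]
      have hp1 : w p = 1 := by linarith
      rcases hw1 p hadj'.ne' hp1 with hp' | hp'
      · rw [hp', hqx]; exact Or.inl (vtx_comm y x)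
      · rw [hp', hqx]; exact Or.inr (vtx_comm z x)
    · have := hwle p hpx
      have := hwle q hqx
      linarith
  · intro hcon
    rcases (vtx_eq_iff hxy' hxz').mp hcon with ⟨_, h2⟩ | ⟨h1, _⟩
    · exact hyz h2
    · exact hxz' h1



/-- region of a vertex: 0 = A (first a), 1 = B (next a), 2 = C (rest) -/
def reg (a : ℕ) (i : Fin n) : ℕ := if i.val < a then 0 else if i.val < 2*a then 1 else 2

/-- the graph: A, B cliques, C independent, A-C and B-C complete, A-B empty -/
@[reducible] def EPG (n a : ℕ) : SimpleGraph (Fin n) where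
  Adj i j := i ≠ j ∧ ¬(reg a i = 0 ∧ reg a j = 1) ∧ ¬(reg a i = 1 ∧ reg a j = 0)
    ∧ ¬(reg a i = 2 ∧ reg a j = 2)
  symm := ⟨by
    rintro i j ⟨h1, h2, h3, h4⟩
    exact ⟨h1.symm, fun ⟨u, v⟩ => h3 ⟨v, u⟩, fun ⟨u, v⟩ => h2 ⟨v, u⟩,
      fun ⟨u, v⟩ => h4 ⟨v, u⟩⟩⟩
  loopless := ⟨fun i h => h.1 rfl⟩

lemma reg0 {a : ℕ} {i : Fin n} (h : i.val < a) : reg a i = 0 := by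
  unfold reg; rw [if_pos h]

lemma reg1 {a : ℕ} {i : Fin n} (h1 : a ≤ i.val) (h2 : i.val < 2*a) : reg a i = 1 := by
  unfold reg; rw [if_neg (by omega), if_pos h2]

lemma reg2 {a : ℕ} {i : Fin n} (h : 2*a ≤ i.val) : reg a i = 2 := by
  unfold reg; rw [if_neg (by omega), if_neg (by omega)]

lemma reg_ne2 {a : ℕ} {i : Fin n} (h : i.val < 2*a) : reg a i ≠ 2 := by
  unfold reg; split_ifs <;> omega

lemma adj_same0 {a : ℕ} {i j : Fin n} (hi : reg a i = 0) (hj : reg a j = 0)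
    (hne : i ≠ j) : (EPG n a).Adj i j := ⟨hne, by rw [hi, hj]; omega⟩

lemma adj_same1 {a : ℕ} {i j : Fin n} (hi : reg a i = 1) (hj : reg a j = 1)
    (hne : i ≠ j) : (EPG n a).Adj i j := ⟨hne, by rw [hi, hj]; omega⟩

lemma adj_2ne {a : ℕ} {i j : Fin n} (hi : reg a i = 2) (hj : reg a j ≠ 2) :
    (EPG n a).Adj i j :=
  ⟨fun h => hj (h ▸ hi), by
    rcases Nat.lt_or_ge (j.val) a with h | h
    · rw [hi, reg0 h]; omega
    · rcases Nat.lt_or_ge (j.val) (2*a) with h' | h'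
      · rw [hi, reg1 h h']; omega
      · exact absurd (reg2 h') hj⟩

lemma adj_ne2_2 {a : ℕ} {i j : Fin n} (hi : reg a i ≠ 2) (hj : reg a j = 2) :
    (EPG n a).Adj i j := ((adj_2ne hj hi)).symm

lemma nadj_01 {a : ℕ} {i j : Fin n} (hi : reg a i = 0) (hj : reg a j = 1) :
    ¬ (EPG n a).Adj i j := fun ⟨_, h2, _, _⟩ => h2 ⟨hi, hj⟩

lemma nadj_10 {a : ℕ} {i j : Fin n} (hi : reg a i = 1) (hj : reg a j = 0) :
    ¬ (EPG n a).Adj i j := fun ⟨_, _, h3, _⟩ => h3 ⟨hi, hj⟩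

/-- counting ordered `<`-pairs in a finset -/
lemma card_ltpairs (s : Finset (Fin n)) :
    ((s ×ˢ s).filter fun p => p.1 < p.2).card = s.card.choose 2 := by
  classical
  set L := (s ×ˢ s).filter fun p => p.1 < p.2 with hL
  set R := (s ×ˢ s).filter fun p => p.2 < p.1 with hR
  have hsplit : s.offDiag = L ∪ R := by
    ext ⟨p1, p2⟩
    simp only [Finset.mem_offDiag, hL, hR, Finset.mem_union, Finset.mem_filter,
      Finset.mem_product, ne_iff_lt_or_gt]
    tauto
  have hdisj : Disjoint L R := by
    rw [Finset.disjoint_left]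
    rintro ⟨p1, p2⟩ h1 h2
    rw [hL, Finset.mem_filter] at h1
    rw [hR, Finset.mem_filter] at h2
    exact absurd h2.2 (not_lt.mpr h1.2.le)
  have hcardeq : R.card = L.card := by
    apply Finset.card_bij (fun p _ => Prod.swap p)
    · rintro ⟨p1, p2⟩ hp
      rw [hR, Finset.mem_filter, Finset.mem_product] at hp
      rw [hL, Finset.mem_filter, Finset.mem_product]
      exact ⟨⟨hp.1.2, hp.1.1⟩, hp.2⟩
    · rintro ⟨p1, p2⟩ _ ⟨q1, q2⟩ _ h
      simpa [Prod.ext_iff, and_comm] using h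
    · rintro ⟨p1, p2⟩ hp
      rw [hL, Finset.mem_filter, Finset.mem_product] at hp
      refine ⟨(p2, p1), ?_, rfl⟩
      rw [hR, Finset.mem_filter, Finset.mem_product]
      exact ⟨⟨hp.1.2, hp.1.1⟩, hp.2⟩
  have h2L : 2 * L.card = s.card * s.card - s.card := by
    rw [← Finset.offDiag_card, hsplit, Finset.card_union_of_disjoint hdisj, hcardeq]
    ring
  have hmm : s.card * s.card - s.card = s.card * (s.card - 1) := by
    rcases s.card with _ | m
    · rfl
    · simp [Nat.succ_sub_one, Nat.mul_sub, Nat.mul_succ]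
  rw [Nat.choose_two_right]
  omega

lemma two_mul_choose_two (m : ℕ) : 2 * m.choose 2 = m * (m - 1) := by
  induction m with
  | zero => rfl
  | succ k ih =>
    rw [Nat.choose_succ_succ, Nat.choose_one_right, Nat.succ_sub_one, mul_add, ih]
    cases k with
    | zero => rfl
    | succ j => rw [Nat.succ_sub_one]; ring

/-- the key integer inequality -/
lemma numkey (x y A2 B2 : ℤ) (hx : 2 ≤ x) (hxy : x ≤ 3*y) (hyx : 3*y ≤ x + 6)
    (hA2 : 2*A2 = x^2 - x) (hB2 : B2 = x*(2*x-1)) :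
    (2*x + y)^4 ≤ 54*(A2^2 + A2*(x*y) + A2*(x*y) + y*B2 + (x^2 - x)*y + (x^2 - x)*y) := by
  have hd0 : (0:ℤ) ≤ 3*y - x := by omega
  have hd6 : (0:ℤ) ≤ 6 - (3*y - x) := by omega
  have hx0 : (0:ℤ) ≤ x := by omega
  have hxm2 : (0:ℤ) ≤ x - 2 := by omega
  have h6pd : (0:ℤ) ≤ 6 + (3*y - x) := by omega
  have h2x3 : (0:ℤ) ≤ 2*x - 3 := by omega
  have hquad : (0:ℤ) ≤ (3*y - x)*(3*y - x) + 6*(3*y - x) + 36 := by nlinarith [sq_nonneg (3*y - x + 3)]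
  have t1 : (0:ℤ) ≤ 216*((3*y - x)*(x-2)) := by
    have := mul_nonneg hd0 hxm2; linarith
  have t2 : (0:ℤ) ≤ 56*(x*(3*y - x)*((6 - (3*y - x))*(6 + (3*y - x)))) := by
    have := mul_nonneg (mul_nonneg hx0 hd0) (mul_nonneg hd6 h6pd); linarith
  have t3 : (0:ℤ) ≤ 5490*(x*(3*y - x)*(x-2)) := by
    have := mul_nonneg (mul_nonneg hx0 hd0) hxm2; linarith
  have t4 : (0:ℤ) ≤ 588*(x*x*(3*y - x)*(6 - (3*y - x))) := by
    have := mul_nonneg (mul_nonneg (mul_nonneg hx0 hx0) hd0) hd6; linarith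
  have t5 : (0:ℤ) ≤ 135*(x*x*(3*y - x)*(x-2)) := by
    have := mul_nonneg (mul_nonneg (mul_nonneg hx0 hx0) hd0) hxm2; linarith
  have t6 : (0:ℤ) ≤ 2187*(x*x*(2*x-3)) := by
    have := mul_nonneg (mul_nonneg hx0 hx0) h2x3; linarith
  have t7 : (0:ℤ) ≤ 2*((3*y - x)*((6 - (3*y - x))*((3*y - x)*(3*y - x) + 6*(3*y - x) + 36))) := by
    have := mul_nonneg hd0 (mul_nonneg hd6 hquad); linarith
  have t8 : (0:ℤ) ≤ 301*(x*x*x*x) := by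
    have := mul_nonneg (mul_nonneg (mul_nonneg hx0 hx0) hx0) hx0; linarith
  have t9 : (0:ℤ) ≤ 37*(x*x*x*(3*y - x)) := by
    have := mul_nonneg (mul_nonneg (mul_nonneg hx0 hx0) hx0) hd0; linarith
  have hA2sq : 4*A2^2 = (x^2 - x)^2 := by linear_combination (2*A2 + x^2 - x)*hA2
  have hA2xy : 2*(A2*(x*y)) = (x^2 - x)*(x*y) := by linear_combination (x*y)*hA2
  rw [hB2]
  nlinarith [t1, t2, t3, t4, t5, t6, t7, t8, t9, hA2sq, hA2xy]


lemma seg_faithful {p q r s p' q' r' s' : Fin n} (h1 : p ≠ q) (h2 : r ≠ s)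
    (h3 : p' ≠ q') (h4 : r' ≠ s')
    (hne : vtx p q ≠ vtx r s) (hne' : vtx p' q' ≠ vtx r' s')
    (h : segment ℝ (vtx p q) (vtx r s) = segment ℝ (vtx p' q') (vtx r' s')) :
    (vtx p q = vtx p' q' ∧ vtx r s = vtx r' s') ∨
      (vtx p q = vtx r' s' ∧ vtx r s = vtx p' q') := by
  have A1 : vtx p' q' = vtx p q ∨ vtx p' q' = vtx r s :=
    vtx_mem_segment h1 h2 h3 (by rw [h]; exact left_mem_segment ℝ _ _)
  have A2 : vtx r' s' = vtx p q ∨ vtx r' s' = vtx r s :=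
    vtx_mem_segment h1 h2 h4 (by rw [h]; exact right_mem_segment ℝ _ _)
  rcases A1 with e1 | e1 <;> rcases A2 with e2 | e2
  · exact absurd (e1.trans e2.symm) hne'
  · exact Or.inl ⟨e1.symm, e2.symm⟩
  · exact Or.inr ⟨e2.symm, e1.symm⟩
  · exact absurd (e1.trans e2.symm) hne'

end EPaux
set_option maxHeartbeats 4000000 in
open EPaux in
/-- For every integer `n ≥ 6` there is a graph `G` on `n` vertices with no isolated
vertices whose edge polytope `P(G)` has at least `n⁴ / 54` edges (1-dimensional faces). -/
theorem exists_graph_many_polytope_edges (n : ℕ) (hn : 6 ≤ n) :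
    ∃ G : SimpleGraph (Fin n), (∀ v : Fin n, ∃ w : Fin n, G.Adj v w) ∧
      ((n : ℝ) ^ 4 / 54 ≤ (faceCount (edgePolytope G) 1 : ℝ)) := by
  classical
  set a := 3*n/7 with ha
  have ha2 : 2 ≤ a := by omega
  have h2an : 2*a + 1 ≤ n := by omega
  have h7a : 7*a ≤ 3*n := by omega
  have h7a' : 3*n < 7*a + 7 := by omega
  refine ⟨EPG n a, ?_, ?_⟩
  · -- no isolated vertices
    intro v
    by_cases hv : 2*a ≤ v.val
    · refine ⟨⟨0, by omega⟩, adj_2ne (reg2 hv) (reg_ne2 ?_)⟩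
      show (0:ℕ) < 2*a
      omega
    · push_neg at hv
      refine ⟨⟨n-1, by omega⟩, adj_ne2_2 (reg_ne2 hv) (reg2 ?_)⟩
      show 2*a ≤ n-1
      omega
  · -- the face count bound
    set G := EPG n a with hG
    set V : Set (Fin n → ℝ) :=
      {x | ∃ i j : Fin n, G.Adj i j ∧ x = Pi.single i 1 + Pi.single j 1} with hVdef
    have hVvtx : V = {x | ∃ p q : Fin n, G.Adj p q ∧ x = vtx p q} := rfl
    have hVfin : V.Finite := by
      apply Set.Finite.subset (Set.finite_range (fun pq : Fin n × Fin n => vtx pq.1 pq.2))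
      rintro x ⟨p, q, _, rfl⟩
      exact ⟨(p, q), rfl⟩
    set FS : Set (Set (Fin n → ℝ)) :=
      {F | IsExposed ℝ (convexHull ℝ V) F ∧ F.Nonempty ∧ polyDim F = 1} with hFSdef
    have hface : faceCount (edgePolytope G) 1 = FS.ncard := rfl
    have hfin : FS.Finite := by
      apply Set.Finite.subset (finite_exposed_faces hVfin)
      rintro F ⟨h1, h2, _⟩
      exact ⟨h1, h2⟩
    -- the finsets
    have hsA : ∀ m ∈ Finset.range a, m < n := by intro m hm; simp at hm; omega
    have hsB : ∀ m ∈ Finset.Ico a (2*a), m < n := by intro m hm; simp at hm; omega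
    have hsC : ∀ m ∈ Finset.Ico (2*a) n, m < n := by intro m hm; simp at hm; omega
    have hsAB : ∀ m ∈ Finset.range (2*a), m < n := by intro m hm; simp at hm; omega
    set FA := (Finset.range a).attachFin hsA with hFA
    set FB := ((Finset.Ico a (2*a)).attachFin hsB) with hFB
    set FC := ((Finset.Ico (2*a) n).attachFin hsC) with hFC
    set FAB := (Finset.range (2*a)).attachFin hsAB with hFAB
    have hmA : ∀ i : Fin n, i ∈ FA ↔ i.val < a := by
      intro i; rw [hFA, Finset.mem_attachFin, Finset.mem_range]
    have hmB : ∀ i : Fin n, i ∈ FB ↔ a ≤ i.val ∧ i.val < 2*a := by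
      intro i; rw [hFB, Finset.mem_attachFin, Finset.mem_Ico]
    have hmC : ∀ i : Fin n, i ∈ FC ↔ 2*a ≤ i.val := by
      intro i; rw [hFC, Finset.mem_attachFin, Finset.mem_Ico]
      exact ⟨fun h => h.1, fun h => ⟨h, i.isLt⟩⟩
    have hmAB : ∀ i : Fin n, i ∈ FAB ↔ i.val < 2*a := by
      intro i; rw [hFAB, Finset.mem_attachFin, Finset.mem_range]
    have hcFA : FA.card = a := by rw [hFA, Finset.card_attachFin, Finset.card_range]
    have hcFB : FB.card = a := by rw [hFB, Finset.card_attachFin, Nat.card_Ico]; omega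
    have hcFC : FC.card = n - 2*a := by rw [hFC, Finset.card_attachFin, Nat.card_Ico]
    have hcFAB : FAB.card = 2*a := by rw [hFAB, Finset.card_attachFin, Finset.card_range]
    set PA := (FA ×ˢ FA).filter (fun p => p.1 < p.2) with hPA
    set PB := (FB ×ˢ FB).filter (fun p => p.1 < p.2) with hPB
    set PAB := (FAB ×ˢ FAB).filter (fun p => p.1 < p.2) with hPAB
    have hcPA : PA.card = a.choose 2 := by rw [hPA, card_ltpairs, hcFA]
    have hcPB : PB.card = a.choose 2 := by rw [hPB, card_ltpairs, hcFB]
    have hcPAB : PAB.card = (2*a).choose 2 := by rw [hPAB, card_ltpairs, hcFAB]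
    have hmPA : ∀ p : Fin n × Fin n, p ∈ PA ↔ p.1.val < a ∧ p.2.val < a ∧ p.1.val < p.2.val := by
      intro p
      rw [hPA, Finset.mem_filter, Finset.mem_product, hmA, hmA, Fin.lt_def]
      tauto
    have hmPB : ∀ p : Fin n × Fin n, p ∈ PB ↔
        (a ≤ p.1.val ∧ p.1.val < 2*a) ∧ (a ≤ p.2.val ∧ p.2.val < 2*a) ∧ p.1.val < p.2.val := by
      intro p
      rw [hPB, Finset.mem_filter, Finset.mem_product, hmB, hmB, Fin.lt_def]
      tauto
    have hmPAB : ∀ p : Fin n × Fin n, p ∈ PAB ↔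
        p.1.val < 2*a ∧ p.2.val < 2*a ∧ p.1.val < p.2.val := by
      intro p
      rw [hPAB, Finset.mem_filter, Finset.mem_product, hmAB, hmAB, Fin.lt_def]
      tauto
    -- the index sets
    set U1 := PA ×ˢ PB with hU1
    set U2 := PA ×ˢ (FB ×ˢ FC) with hU2
    set U3 := PB ×ˢ (FA ×ˢ FC) with hU3
    set U4 := (FC ×ˢ PAB).image
      (fun p : Fin n × (Fin n × Fin n) => ((p.1, p.2.1), (p.1, p.2.2))) with hU4
    set U5 := (FA.offDiag ×ˢ FC).image
      (fun p : (Fin n × Fin n) × Fin n => ((p.1.1, p.1.2), (p.1.1, p.2))) with hU5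
    set U6 := (FB.offDiag ×ˢ FC).image
      (fun p : (Fin n × Fin n) × Fin n => ((p.1.1, p.1.2), (p.1.1, p.2))) with hU6
    set U := ((((U1 ∪ U2) ∪ U3) ∪ U4) ∪ U5) ∪ U6 with hU
    -- descriptions
    have hd1 : ∀ x : (Fin n × Fin n) × (Fin n × Fin n), x ∈ U1 →
        x.1.1.val < a ∧ x.1.2.val < a ∧ x.1.1.val < x.1.2.val ∧
        a ≤ x.2.1.val ∧ x.2.1.val < 2*a ∧ a ≤ x.2.2.val ∧ x.2.2.val < 2*a ∧
        x.2.1.val < x.2.2.val := by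
      intro x hx
      rw [hU1, Finset.mem_product] at hx
      have h1 := (hmPA _).mp hx.1
      have h2 := (hmPB _).mp hx.2
      tauto
    have hd2 : ∀ x : (Fin n × Fin n) × (Fin n × Fin n), x ∈ U2 →
        x.1.1.val < a ∧ x.1.2.val < a ∧ x.1.1.val < x.1.2.val ∧
        a ≤ x.2.1.val ∧ x.2.1.val < 2*a ∧ 2*a ≤ x.2.2.val := by
      intro x hx
      rw [hU2, Finset.mem_product, Finset.mem_product] at hx
      have h1 := (hmPA _).mp hx.1
      have h2 := (hmB _).mp hx.2.1
      have h3 := (hmC _).mp hx.2.2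
      tauto
    have hd3 : ∀ x : (Fin n × Fin n) × (Fin n × Fin n), x ∈ U3 →
        a ≤ x.1.1.val ∧ x.1.1.val < 2*a ∧ a ≤ x.1.2.val ∧ x.1.2.val < 2*a ∧
        x.1.1.val < x.1.2.val ∧ x.2.1.val < a ∧ 2*a ≤ x.2.2.val := by
      intro x hx
      rw [hU3, Finset.mem_product, Finset.mem_product] at hx
      have h1 := (hmPB _).mp hx.1
      have h2 := (hmA _).mp hx.2.1
      have h3 := (hmC _).mp hx.2.2
      tauto
    have hd4 : ∀ x : (Fin n × Fin n) × (Fin n × Fin n), x ∈ U4 →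
        2*a ≤ x.1.1.val ∧ x.1.1.val = x.2.1.val ∧ x.1.2.val < 2*a ∧
        x.2.2.val < 2*a ∧ x.1.2.val < x.2.2.val := by
      intro x hx
      rw [hU4, Finset.mem_image] at hx
      obtain ⟨⟨c, p, q⟩, hmem, rfl⟩ := hx
      rw [Finset.mem_product] at hmem
      have h1 := (hmC _).mp hmem.1
      have h2 := (hmPAB _).mp hmem.2
      exact ⟨h1, rfl, h2.1, h2.2.1, h2.2.2⟩
    have hd5 : ∀ x : (Fin n × Fin n) × (Fin n × Fin n), x ∈ U5 →
        x.1.1.val < a ∧ x.1.2.val < a ∧ x.1.1.val ≠ x.1.2.val ∧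
        x.1.1.val = x.2.1.val ∧ 2*a ≤ x.2.2.val := by
      intro x hx
      rw [hU5, Finset.mem_image] at hx
      obtain ⟨⟨⟨p, q⟩, c⟩, hmem, rfl⟩ := hx
      rw [Finset.mem_product, Finset.mem_offDiag] at hmem
      have h1 := (hmA _).mp hmem.1.1
      have h2 := (hmA _).mp hmem.1.2.1
      have h3 := (hmC _).mp hmem.2
      exact ⟨h1, h2, fun h => hmem.1.2.2 (Fin.ext h), rfl, h3⟩
    have hd6 : ∀ x : (Fin n × Fin n) × (Fin n × Fin n), x ∈ U6 →
        a ≤ x.1.1.val ∧ x.1.1.val < 2*a ∧ a ≤ x.1.2.val ∧ x.1.2.val < 2*a ∧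
        x.1.1.val ≠ x.1.2.val ∧ x.1.1.val = x.2.1.val ∧ 2*a ≤ x.2.2.val := by
      intro x hx
      rw [hU6, Finset.mem_image] at hx
      obtain ⟨⟨⟨p, q⟩, c⟩, hmem, rfl⟩ := hx
      rw [Finset.mem_product, Finset.mem_offDiag] at hmem
      have h1 := (hmB _).mp hmem.1.1
      have h2 := (hmB _).mp hmem.1.2.1
      have h3 := (hmC _).mp hmem.2
      exact ⟨h1.1, h1.2, h2.1, h2.2, fun h => hmem.1.2.2 (Fin.ext h), rfl, h3⟩
    set Φ : (Fin n × Fin n) × (Fin n × Fin n) → Set (Fin n → ℝ) :=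
      fun x => segment ℝ (vtx x.1.1 x.1.2) (vtx x.2.1 x.2.2) with hPhi
    have hsplit : ∀ x : (Fin n × Fin n) × (Fin n × Fin n), x ∈ U →
        x ∈ U1 ∨ x ∈ U2 ∨ x ∈ U3 ∨ x ∈ U4 ∨ x ∈ U5 ∨ x ∈ U6 := by
      intro x hx
      rw [hU] at hx
      simp only [Finset.mem_union] at hx
      rcases hx with ((((h | h) | h) | h) | h) | h
      · exact Or.inl h
      · exact Or.inr (Or.inl h)
      · exact Or.inr (Or.inr (Or.inl h))
      · exact Or.inr (Or.inr (Or.inr (Or.inl h)))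
      · exact Or.inr (Or.inr (Or.inr (Or.inr (Or.inl h))))
      · exact Or.inr (Or.inr (Or.inr (Or.inr (Or.inr h))))
    have hdesc : ∀ z : (Fin n × Fin n) × (Fin n × Fin n), z ∈ U →
        (z.1.1.val < a ∧ z.1.2.val < a ∧ z.1.1.val < z.1.2.val ∧
          a ≤ z.2.1.val ∧ z.2.1.val < 2*a ∧ a ≤ z.2.2.val ∧ z.2.2.val < 2*a ∧
          z.2.1.val < z.2.2.val) ∨
        (z.1.1.val < a ∧ z.1.2.val < a ∧ z.1.1.val < z.1.2.val ∧
          a ≤ z.2.1.val ∧ z.2.1.val < 2*a ∧ 2*a ≤ z.2.2.val) ∨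
        (a ≤ z.1.1.val ∧ z.1.1.val < 2*a ∧ a ≤ z.1.2.val ∧ z.1.2.val < 2*a ∧
          z.1.1.val < z.1.2.val ∧ z.2.1.val < a ∧ 2*a ≤ z.2.2.val) ∨
        (2*a ≤ z.1.1.val ∧ z.1.1.val = z.2.1.val ∧ z.1.2.val < 2*a ∧
          z.2.2.val < 2*a ∧ z.1.2.val < z.2.2.val) ∨
        (z.1.1.val < a ∧ z.1.2.val < a ∧ z.1.1.val ≠ z.1.2.val ∧
          z.1.1.val = z.2.1.val ∧ 2*a ≤ z.2.2.val) ∨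
        (a ≤ z.1.1.val ∧ z.1.1.val < 2*a ∧ a ≤ z.1.2.val ∧ z.1.2.val < 2*a ∧
          z.1.1.val ≠ z.1.2.val ∧ z.1.1.val = z.2.1.val ∧ 2*a ≤ z.2.2.val) := by
      intro z hz
      rcases hsplit z hz with h | h | h | h | h | h
      · exact Or.inl (hd1 z h)
      · exact Or.inr (Or.inl (hd2 z h))
      · exact Or.inr (Or.inr (Or.inl (hd3 z h)))
      · exact Or.inr (Or.inr (Or.inr (Or.inl (hd4 z h))))
      · exact Or.inr (Or.inr (Or.inr (Or.inr (Or.inl (hd5 z h)))))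
      · exact Or.inr (Or.inr (Or.inr (Or.inr (Or.inr (hd6 z h)))))
    have hvalid : ∀ x : (Fin n × Fin n) × (Fin n × Fin n), x ∈ U →
        x.1.1 ≠ x.1.2 ∧ x.2.1 ≠ x.2.2 ∧ vtx x.1.1 x.1.2 ≠ vtx x.2.1 x.2.2 := by
      intro x hx
      have key : x.1.1.val ≠ x.1.2.val ∧ x.2.1.val ≠ x.2.2.val ∧
          ¬((x.1.1.val = x.2.1.val ∧ x.1.2.val = x.2.2.val) ∨
            (x.1.1.val = x.2.2.val ∧ x.1.2.val = x.2.1.val)) := by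
        rcases hdesc x hx with d | d | d | d | d | d <;> omega
      refine ⟨fun h => key.1 (congrArg Fin.val h),
        fun h => key.2.1 (congrArg Fin.val h), ?_⟩
      intro hcon
      rcases (vtx_eq_iff (fun h => key.1 (congrArg Fin.val h))
        (fun h => key.2.1 (congrArg Fin.val h))).mp hcon with ⟨e1, e2⟩ | ⟨e1, e2⟩
      · exact key.2.2 (Or.inl ⟨congrArg Fin.val e1, congrArg Fin.val e2⟩)
      · exact key.2.2 (Or.inr ⟨congrArg Fin.val e1, congrArg Fin.val e2⟩)
    -- each index gives a face
    have hmaps : ∀ x : (Fin n × Fin n) × (Fin n × Fin n), x ∈ U → Φ x ∈ FS := by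
      intro x hx
      rcases hsplit x hx with h | h | h | h | h | h
      · -- U1 : A-pair and B-pair, disjoint, no cross edges at all
        have d := hd1 x h
        have hij : G.Adj x.1.1 x.1.2 := adj_same0 (reg0 (by omega)) (reg0 (by omega))
          (fun hh => by have := congrArg Fin.val hh; omega)
        have hkl : G.Adj x.2.1 x.2.2 := adj_same1 (reg1 (by omega) (by omega))
          (reg1 (by omega) (by omega)) (fun hh => by have := congrArg Fin.val hh; omega)
        have hres := face_of_crossless hij hkl
          (nadj_01 (reg0 (by omega)) (reg1 (by omega) (by omega)))
          (nadj_01 (reg0 (by omega)) (reg1 (by omega) (by omega)))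
          (fun hh => by have := congrArg Fin.val hh; omega)
          (fun hh => by have := congrArg Fin.val hh; omega)
          (fun hh => by have := congrArg Fin.val hh; omega)
          (fun hh => by have := congrArg Fin.val hh; omega)
        exact ⟨hres.1, hres.2.1, hres.2.2⟩
      · -- U2: A-pair (second) against B-C edge; crossless vertex is the B vertex
        have d := hd2 x h
        have hij : G.Adj x.2.1 x.2.2 := adj_ne2_2
          (by rw [reg1 (by omega) (by omega)]; omega) (reg2 (by omega))
        have hkl : G.Adj x.1.1 x.1.2 := adj_same0 (reg0 (by omega)) (reg0 (by omega))
          (fun hh => by have := congrArg Fin.val hh; omega)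
        have hres := face_of_crossless hij hkl
          (nadj_10 (reg1 (by omega) (by omega)) (reg0 (by omega)))
          (nadj_10 (reg1 (by omega) (by omega)) (reg0 (by omega)))
          (fun hh => by have := congrArg Fin.val hh; omega)
          (fun hh => by have := congrArg Fin.val hh; omega)
          (fun hh => by have := congrArg Fin.val hh; omega)
          (fun hh => by have := congrArg Fin.val hh; omega)
        refine ⟨?_, ?_, ?_⟩
        · show IsExposed ℝ (convexHull ℝ V) (Φ x)
          have : Φ x = segment ℝ (vtx x.2.1 x.2.2) (vtx x.1.1 x.1.2) := segment_symm ℝ _ _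
          rw [this]
          exact hres.1
        · have : Φ x = segment ℝ (vtx x.2.1 x.2.2) (vtx x.1.1 x.1.2) := segment_symm ℝ _ _
          rw [this]
          exact hres.2.1
        · have : Φ x = segment ℝ (vtx x.2.1 x.2.2) (vtx x.1.1 x.1.2) := segment_symm ℝ _ _
          show polyDim (Φ x) = 1
          rw [this]
          exact hres.2.2
      ·
        have d := hd3 x h
        have hij : G.Adj x.2.1 x.2.2 := adj_ne2_2
          (by rw [reg0 (by omega)]; omega) (reg2 (by omega))
        have hkl : G.Adj x.1.1 x.1.2 := adj_same1 (reg1 (by omega) (by omega))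
          (reg1 (by omega) (by omega)) (fun hh => by have := congrArg Fin.val hh; omega)
        have hres := face_of_crossless hij hkl
          (nadj_01 (reg0 (by omega)) (reg1 (by omega) (by omega)))
          (nadj_01 (reg0 (by omega)) (reg1 (by omega) (by omega)))
          (fun hh => by have := congrArg Fin.val hh; omega)
          (fun hh => by have := congrArg Fin.val hh; omega)
          (fun hh => by have := congrArg Fin.val hh; omega)
          (fun hh => by have := congrArg Fin.val hh; omega)
        refine ⟨?_, ?_, ?_⟩
        · show IsExposed ℝ (convexHull ℝ V) (Φ x)
          have : Φ x = segment ℝ (vtx x.2.1 x.2.2) (vtx x.1.1 x.1.2) := segment_symm ℝ _ _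
          rw [this]
          exact hres.1
        · have : Φ x = segment ℝ (vtx x.2.1 x.2.2) (vtx x.1.1 x.1.2) := segment_symm ℝ _ _
          rw [this]
          exact hres.2.1
        · have : Φ x = segment ℝ (vtx x.2.1 x.2.2) (vtx x.1.1 x.1.2) := segment_symm ℝ _ _
          show polyDim (Φ x) = 1
          rw [this]
          exact hres.2.2
      · -- U4: star at a C vertex
        rw [hU4, Finset.mem_image] at h
        obtain ⟨⟨c, p, q⟩, hmem, rfl⟩ := h
        rw [Finset.mem_product] at hmem
        have h1 := (hmC _).mp hmem.1
        have h2 := (hmPAB _).mp hmem.2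
        dsimp only at h1 h2
        have hres := face_of_star (G := G)
          (adj_2ne (reg2 h1) (reg_ne2 (show p.val < 2*a by omega)))
          (adj_2ne (reg2 h1) (reg_ne2 (show q.val < 2*a by omega)))
          (fun hh => by have := congrArg Fin.val hh; omega)
        exact ⟨hres.1, hres.2.1, hres.2.2⟩
      · -- U5: star at an A vertex with an A neighbour and a C neighbour
        rw [hU5, Finset.mem_image] at h
        obtain ⟨⟨⟨p, q⟩, c⟩, hmem, rfl⟩ := h
        rw [Finset.mem_product, Finset.mem_offDiag] at hmem
        have h1 := (hmA _).mp hmem.1.1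
        have h2 := (hmA _).mp hmem.1.2.1
        have h3 := (hmC _).mp hmem.2
        dsimp only at h1 h2 h3
        have hres := face_of_star (G := G)
          (adj_same0 (reg0 h1) (reg0 h2) hmem.1.2.2)
          (adj_ne2_2 (by rw [reg0 h1]; omega) (reg2 h3))
          (fun hh => by have := congrArg Fin.val hh; omega)
        exact ⟨hres.1, hres.2.1, hres.2.2⟩
      · -- U6: star at a B vertex with a B neighbour and a C neighbour
        rw [hU6, Finset.mem_image] at h
        obtain ⟨⟨⟨p, q⟩, c⟩, hmem, rfl⟩ := h
        rw [Finset.mem_product, Finset.mem_offDiag] at hmem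
        have h1 := (hmB _).mp hmem.1.1
        have h2 := (hmB _).mp hmem.1.2.1
        have h3 := (hmC _).mp hmem.2
        dsimp only at h1 h2 h3
        have hres := face_of_star (G := G)
          (adj_same1 (reg1 h1.1 h1.2) (reg1 h2.1 h2.2) hmem.1.2.2)
          (adj_ne2_2 (by rw [reg1 h1.1 h1.2]; omega) (reg2 h3))
          (fun hh => by have := congrArg Fin.val hh; omega)
        exact ⟨hres.1, hres.2.1, hres.2.2⟩
    -- injectivity
    have hinj : Set.InjOn Φ ↑U := by
      intro x hx y hy hxy
      rw [Finset.mem_coe] at hx hy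
      obtain ⟨vx1, vx2, vx3⟩ := hvalid x hx
      obtain ⟨vy1, vy2, vy3⟩ := hvalid y hy
      have hseg : segment ℝ (vtx x.1.1 x.1.2) (vtx x.2.1 x.2.2)
          = segment ℝ (vtx y.1.1 y.1.2) (vtx y.2.1 y.2.2) := hxy
      have E := seg_faithful vx1 vx2 vy1 vy2 vx3 vy3 hseg
      have R : (((x.1.1 = y.1.1 ∧ x.1.2 = y.1.2) ∨ (x.1.1 = y.1.2 ∧ x.1.2 = y.1.1)) ∧
            ((x.2.1 = y.2.1 ∧ x.2.2 = y.2.2) ∨ (x.2.1 = y.2.2 ∧ x.2.2 = y.2.1))) ∨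
          (((x.1.1 = y.2.1 ∧ x.1.2 = y.2.2) ∨ (x.1.1 = y.2.2 ∧ x.1.2 = y.2.1)) ∧
            ((x.2.1 = y.1.1 ∧ x.2.2 = y.1.2) ∨ (x.2.1 = y.1.2 ∧ x.2.2 = y.1.1))) := by
        rcases E with ⟨E1, E2⟩ | ⟨E1, E2⟩
        · exact Or.inl ⟨(vtx_eq_iff vx1 vy1).mp E1, (vtx_eq_iff vx2 vy2).mp E2⟩
        · exact Or.inr ⟨(vtx_eq_iff vx1 vy2).mp E1, (vtx_eq_iff vx2 vy1).mp E2⟩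
      simp only [Fin.ext_iff] at R
      have dx := hdesc x hx
      have dy := hdesc y hy
      have key : x.1.1.val = y.1.1.val ∧ x.1.2.val = y.1.2.val ∧
          x.2.1.val = y.2.1.val ∧ x.2.2.val = y.2.2.val := by
        rcases dx with d | d | d | d | d | d <;>
          rcases dy with e | e | e | e | e | e <;>
          rcases R with ⟨R1 | R1, R2 | R2⟩ | ⟨R1 | R1, R2 | R2⟩ <;>
          omega
      obtain ⟨k1, k2, k3, k4⟩ := key
      exact Prod.ext_iff.mpr ⟨Prod.ext_iff.mpr ⟨Fin.ext k1, Fin.ext k2⟩,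
        Prod.ext_iff.mpr ⟨Fin.ext k3, Fin.ext k4⟩⟩
    -- disjointness and cardinalities
    have dsj12 : Disjoint U1 U2 := Finset.disjoint_left.mpr
      (fun {x} h1 h2 => by have := hd1 _ h1; have := hd2 _ h2; omega)
    have dsj13 : Disjoint U1 U3 := Finset.disjoint_left.mpr
      (fun {x} h1 h2 => by have := hd1 _ h1; have := hd3 _ h2; omega)
    have dsj14 : Disjoint U1 U4 := Finset.disjoint_left.mpr
      (fun {x} h1 h2 => by have := hd1 _ h1; have := hd4 _ h2; omega)
    have dsj15 : Disjoint U1 U5 := Finset.disjoint_left.mpr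
      (fun {x} h1 h2 => by have := hd1 _ h1; have := hd5 _ h2; omega)
    have dsj16 : Disjoint U1 U6 := Finset.disjoint_left.mpr
      (fun {x} h1 h2 => by have := hd1 _ h1; have := hd6 _ h2; omega)
    have dsj23 : Disjoint U2 U3 := Finset.disjoint_left.mpr
      (fun {x} h1 h2 => by have := hd2 _ h1; have := hd3 _ h2; omega)
    have dsj24 : Disjoint U2 U4 := Finset.disjoint_left.mpr
      (fun {x} h1 h2 => by have := hd2 _ h1; have := hd4 _ h2; omega)
    have dsj25 : Disjoint U2 U5 := Finset.disjoint_left.mpr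
      (fun {x} h1 h2 => by have := hd2 _ h1; have := hd5 _ h2; omega)
    have dsj26 : Disjoint U2 U6 := Finset.disjoint_left.mpr
      (fun {x} h1 h2 => by have := hd2 _ h1; have := hd6 _ h2; omega)
    have dsj34 : Disjoint U3 U4 := Finset.disjoint_left.mpr
      (fun {x} h1 h2 => by have := hd3 _ h1; have := hd4 _ h2; omega)
    have dsj35 : Disjoint U3 U5 := Finset.disjoint_left.mpr
      (fun {x} h1 h2 => by have := hd3 _ h1; have := hd5 _ h2; omega)
    have dsj36 : Disjoint U3 U6 := Finset.disjoint_left.mpr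
      (fun {x} h1 h2 => by have := hd3 _ h1; have := hd6 _ h2; omega)
    have dsj45 : Disjoint U4 U5 := Finset.disjoint_left.mpr
      (fun {x} h1 h2 => by have := hd4 _ h1; have := hd5 _ h2; omega)
    have dsj46 : Disjoint U4 U6 := Finset.disjoint_left.mpr
      (fun {x} h1 h2 => by have := hd4 _ h1; have := hd6 _ h2; omega)
    have dsj56 : Disjoint U5 U6 := Finset.disjoint_left.mpr
      (fun {x} h1 h2 => by have := hd5 _ h1; have := hd6 _ h2; omega)
    have D3 : Disjoint (U1 ∪ U2) U3 := by
      rw [Finset.disjoint_union_left]; exact ⟨dsj13, dsj23⟩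
    have D4 : Disjoint ((U1 ∪ U2) ∪ U3) U4 := by
      rw [Finset.disjoint_union_left, Finset.disjoint_union_left]
      exact ⟨⟨dsj14, dsj24⟩, dsj34⟩
    have D5 : Disjoint (((U1 ∪ U2) ∪ U3) ∪ U4) U5 := by
      rw [Finset.disjoint_union_left, Finset.disjoint_union_left,
        Finset.disjoint_union_left]
      exact ⟨⟨⟨dsj15, dsj25⟩, dsj35⟩, dsj45⟩
    have D6 : Disjoint ((((U1 ∪ U2) ∪ U3) ∪ U4) ∪ U5) U6 := by
      rw [Finset.disjoint_union_left, Finset.disjoint_union_left,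
        Finset.disjoint_union_left, Finset.disjoint_union_left]
      exact ⟨⟨⟨⟨dsj16, dsj26⟩, dsj36⟩, dsj46⟩, dsj56⟩
    have hcard : U.card = U1.card + U2.card + U3.card + U4.card + U5.card + U6.card := by
      rw [hU, Finset.card_union_of_disjoint D6, Finset.card_union_of_disjoint D5,
        Finset.card_union_of_disjoint D4, Finset.card_union_of_disjoint D3,
        Finset.card_union_of_disjoint dsj12]
    have hc1 : U1.card = a.choose 2 * a.choose 2 := by
      rw [hU1, Finset.card_product, hcPA, hcPB]
    have hc2 : U2.card = a.choose 2 * (a * (n - 2*a)) := by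
      rw [hU2, Finset.card_product, Finset.card_product, hcPA, hcFB, hcFC]
    have hc3 : U3.card = a.choose 2 * (a * (n - 2*a)) := by
      rw [hU3, Finset.card_product, Finset.card_product, hcPB, hcFA, hcFC]
    have hc4 : U4.card = (n - 2*a) * ((2*a).choose 2) := by
      rw [hU4, Finset.card_image_of_injective _ (by
        rintro ⟨c, p1, p2⟩ ⟨c', q1, q2⟩ hpq
        simp only [Prod.mk.injEq] at hpq ⊢
        tauto), Finset.card_product, hcFC, hcPAB]
    have hc5 : U5.card = (a * a - a) * (n - 2*a) := by
      rw [hU5, Finset.card_image_of_injective _ (by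
        rintro ⟨⟨p1, p2⟩, c⟩ ⟨⟨q1, q2⟩, c'⟩ hpq
        simp only [Prod.mk.injEq] at hpq ⊢
        tauto), Finset.card_product, Finset.offDiag_card, hcFA, hcFC]
    have hc6 : U6.card = (a * a - a) * (n - 2*a) := by
      rw [hU6, Finset.card_image_of_injective _ (by
        rintro ⟨⟨p1, p2⟩, c⟩ ⟨⟨q1, q2⟩, c'⟩ hpq
        simp only [Prod.mk.injEq] at hpq ⊢
        tauto), Finset.card_product, Finset.offDiag_card, hcFB, hcFC]
    -- the numeric bound
    have hA2 : 2 * a.choose 2 = a * (a - 1) := two_mul_choose_two a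
    have hB2 : (2*a).choose 2 = a * (2*a - 1) := by
      have h1 : 2 * ((2*a).choose 2) = (2*a) * (2*a - 1) := two_mul_choose_two (2*a)
      have h2 : (2*a) * (2*a - 1) = 2 * (a * (2*a - 1)) := mul_assoc 2 a (2*a - 1)
      omega
    have hA2z : 2 * ((a.choose 2 : ℤ)) = (a:ℤ)^2 - (a:ℤ) := by
      have h1 : ((2 * a.choose 2 : ℕ) : ℤ) = ((a * (a - 1) : ℕ) : ℤ) := by rw [hA2]
      rw [Nat.cast_mul, Nat.cast_mul, Nat.cast_sub (by omega : 1 ≤ a)] at h1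
      push_cast at h1 ⊢
      linear_combination h1
    have hB2z : ((2*a).choose 2 : ℤ) = (a:ℤ) * (2*(a:ℤ) - 1) := by
      have h1 : (((2*a).choose 2 : ℕ) : ℤ) = ((a * (2*a - 1) : ℕ) : ℤ) := by rw [hB2]
      rw [Nat.cast_mul, Nat.cast_sub (by omega : 1 ≤ 2*a)] at h1
      push_cast at h1 ⊢
      linear_combination h1
    have key := numkey (a:ℤ) ((n:ℤ) - 2*(a:ℤ)) ((a.choose 2 : ℕ) : ℤ) (((2*a).choose 2 : ℕ) : ℤ)
      (by exact_mod_cast ha2) (by omega) (by omega) hA2z hB2z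
    have hUz : (U.card : ℤ) = ((a.choose 2 : ℕ) : ℤ)^2
        + ((a.choose 2 : ℕ) : ℤ) * ((a:ℤ) * ((n:ℤ) - 2*(a:ℤ)))
        + ((a.choose 2 : ℕ) : ℤ) * ((a:ℤ) * ((n:ℤ) - 2*(a:ℤ)))
        + ((n:ℤ) - 2*(a:ℤ)) * (((2*a).choose 2 : ℕ) : ℤ)
        + ((a:ℤ)^2 - (a:ℤ)) * ((n:ℤ) - 2*(a:ℤ))
        + ((a:ℤ)^2 - (a:ℤ)) * ((n:ℤ) - 2*(a:ℤ)) := by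
      rw [hcard, hc1, hc2, hc3, hc4, hc5, hc6]
      have haa : a ≤ a * a := Nat.le_mul_of_pos_left a (by omega)
      push_cast [Nat.cast_sub (by omega : 2*a ≤ n), Nat.cast_sub haa]
      ring
    have hZ : (n:ℤ)^4 ≤ 54 * (U.card : ℤ) := by
      rw [hUz]
      have h0 : (2*(a:ℤ) + ((n:ℤ) - 2*(a:ℤ)))^4 = (n:ℤ)^4 := by ring
      rw [h0] at key
      linarith [key]
    have hN : n^4 ≤ 54 * U.card := by exact_mod_cast hZ
    -- conclude
    have hcnt : U.card ≤ FS.ncard := by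
      rw [Set.ncard_eq_toFinset_card FS hfin]
      exact Finset.card_le_card_of_injOn Φ
        (fun u hu => (Set.Finite.mem_toFinset hfin).mpr (hmaps u hu)) hinj
    rw [div_le_iff₀ (by norm_num : (0:ℝ) < 54), hface]
    have hfin2 : ((n^4 : ℕ) : ℝ) ≤ ((54 * FS.ncard : ℕ) : ℝ) :=
      Nat.cast_le.mpr (le_trans hN (Nat.mul_le_mul_left 54 hcnt))
    push_cast at hfin2
    linarith
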